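/- Let β be a learning success criterion (a predicate on pairs of a learner and a text) that allows for simulation on equivalent text, and let ℒ be a class of languages learnable from texts under β by some BMS learner using only finitely many states on every text for a language in ℒ. Then there is a BMS learner N that never returns to a withdrawn state (for all finite sequences σ ⊑ τ ⊑ ρ over Σ that are prefixes of one another, s*_N(σ) = s*_N(ρ) implies s*_N(σ) = s*_N(τ)) and that learns ℒ from texts under β while using only finitely many states on every text for a language in ℒ. -/

import Mathlib

/-!
Common framework: learning languages (c.e. subsets of ℕ) in the limit from texts,
by partial computable learners; iterative learners and bounded memory states (BMS)
learners; the usual learning restrictions.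
-/

namespace BMSLearning

/-- Input alphabet `Σ = ℕ ∪ {#}`; `none` plays the role of the pause symbol `#`. -/
abbrev Sig : Type := Option ℕ

/-- Output alphabet `Ω = ℕ ∪ {?}`; `none` plays the role of `?`. -/
abbrev Hyp : Type := Option ℕ

/-- A fixed acceptable programming system `φ`. -/
noncomputable def phi (p : ℕ) : ℕ →. ℕ :=
  Nat.Partrec.Code.eval (Denumerable.ofNat Nat.Partrec.Code p)

/-- `W p` is the domain of the `p`-th partial computable function. -/
noncomputable def W (p : ℕ) : Set ℕ := {x | (phi p x).Dom}

/-- A learner is a partial (computable) function from finite sequences over `Σ` to `Ω`. -/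
abbrev Learner : Type := List Sig →. Hyp

/-- `T[t]`: the initial segment of length `t` of the text `T`. -/
def seg (T : ℕ → Sig) (t : ℕ) : List Sig := (List.range t).map T

/-- The content of a finite sequence. -/
def cnt (σ : List Sig) : Set ℕ := {x | some x ∈ σ}

/-- The content of an infinite sequence. -/
def cntT (T : ℕ → Sig) : Set ℕ := {x | ∃ t, T t = some x}

/-- `T` is a text for `L`. -/
def IsTextFor (T : ℕ → Sig) (L : Set ℕ) : Prop := cntT T = L

/-- The learner `M` outputs the (proper) hypothesis `e ∈ ℕ` at time `t` on text `T`. -/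
def outputs (M : Learner) (T : ℕ → Sig) (t : ℕ) (e : ℕ) : Prop :=
  M (seg T t) = Part.some (some e)

/-- `M` Ex-learns `L` from the text `T`: the learning sequence is defined, and from
some point on, a correct hypothesis is output and never changed (except possibly to `?`). -/
def Ex (M : Learner) (L : Set ℕ) (T : ℕ → Sig) : Prop :=
  (∀ t, (M (seg T t)).Dom) ∧
  ∃ t₀ e, outputs M T t₀ e ∧ W e = L ∧
    ∀ t, t₀ ≤ t → ∀ h : Hyp, M (seg T t) = Part.some h → h ≠ none → h = some e

/-- `M` Ex-converges on the text `T` (syntactic convergence, no correctness demanded). -/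
def ExConverges (M : Learner) (T : ℕ → Sig) : Prop :=
  ∃ t₀ h₀, M (seg T t₀) = Part.some h₀ ∧
    ∀ t, t₀ ≤ t → ∀ h : Hyp, M (seg T t) = Part.some h → h ≠ none → h = h₀

/-- The iterated state function `s*` of a BMS learner with state transition function `sf`:
`s*(ε) = 0` and `s*(σ⌢x) = sf(s*(σ), x)`. -/
def sStar (sf : ℕ × Sig →. ℕ) (σ : List Sig) : Part ℕ :=
  σ.foldl (fun q x => q.bind fun a => sf (a, x)) (Part.some 0)

/-- The learner determined by a hypothesis generating function `hf` and a state
transition function `sf`:  `M(ε) = ?` and `M(σ⌢x) = hf(s*(σ), x)`. -/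
noncomputable def bmsLearner (hf : ℕ × Sig →. Hyp) (sf : ℕ × Sig →. ℕ) : Learner :=
  fun τ =>
    if hτ : τ = [] then Part.some (none : Hyp)
    else (sStar sf τ.dropLast).bind fun q => hf (q, τ.getLast hτ)

/-- `(hf, sf)` is an admissible presentation of a BMS learner: both functions are
partial computable and they have equal domains. -/
def BMSPair (hf : ℕ × Sig →. Hyp) (sf : ℕ × Sig →. ℕ) : Prop :=
  Partrec hf ∧ Partrec sf ∧ ∀ p : ℕ × Sig, (hf p).Dom ↔ (sf p).Dom

/-- `BMS*`: the BMS learner with state transition function `sf` uses only finitely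
many states on the text `T`. -/
def StatesFin (sf : ℕ × Sig →. ℕ) (T : ℕ → Sig) : Prop :=
  {q : ℕ | ∃ t, sStar sf (seg T t) = Part.some q}.Finite

/-- The iterative learner determined by the hypothesis generating function `hf`:
`M(ε) = ?` and `M(σ⌢x) = hf(M(σ), x)`. -/
def itLearner (hf : Hyp × Sig →. Hyp) : Learner :=
  fun τ => τ.foldl (fun q x => q.bind fun a => hf (a, x)) (Part.some (none : Hyp))

/-- `[TxtBMS*δEx]`: the classes of languages Ex-learnable from texts under the
restriction `δ` by a BMS learner using finitely many states on each text
for a language of the class. -/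
def TxtBMSstarEx (δ : Learner → (ℕ → Sig) → Prop) : Set (Set (Set ℕ)) :=
  {ℒ | ∃ hf sf, BMSPair hf sf ∧
      ∀ L ∈ ℒ, ∀ T, IsTextFor T L →
        Ex (bmsLearner hf sf) L T ∧ StatesFin sf T ∧ δ (bmsLearner hf sf) T}

/-- `[ItTxtδEx]`: the classes of languages Ex-learnable from texts under the
restriction `δ` by an iterative learner. -/
def ItTxtEx (δ : Learner → (ℕ → Sig) → Prop) : Set (Set (Set ℕ)) :=
  {ℒ | ∃ hf, Partrec hf ∧
      ∀ L ∈ ℒ, ∀ T, IsTextFor T L → Ex (itLearner hf) L T ∧ δ (itLearner hf) T}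

/-! ### Learning restrictions -/

/-- The trivial restriction `T`. -/
def Triv : Learner → (ℕ → Sig) → Prop := fun _ _ => True

/-- Conservative. -/
def Conv (M : Learner) (T : ℕ → Sig) : Prop :=
  ∀ s t, s ≤ t → ∀ es et : ℕ, outputs M T s es → outputs M T t et →
    cnt (seg T t) ⊆ W es → es = et

/-- Decisive. -/
def Dec (M : Learner) (T : ℕ → Sig) : Prop :=
  ∀ r s t, r ≤ s → s ≤ t → ∀ er es et : ℕ,
    outputs M T r er → outputs M T s es → outputs M T t et →
    W er = W et → W er = W es

/-- Cautious. -/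
def Caut (M : Learner) (T : ℕ → Sig) : Prop :=
  ∀ s t, s ≤ t → ∀ es et : ℕ, outputs M T s es → outputs M T t et →
    ¬ (W et ⊂ W es)

/-- Weakly monotonic. -/
def WMon (M : Learner) (T : ℕ → Sig) : Prop :=
  ∀ s t, s ≤ t → ∀ es et : ℕ, outputs M T s es → outputs M T t et →
    cnt (seg T t) ⊆ W es → W es ⊆ W et

/-- Monotonic. -/
def Mon (M : Learner) (T : ℕ → Sig) : Prop :=
  ∀ s t, s ≤ t → ∀ es et : ℕ, outputs M T s es → outputs M T t et →
    W es ∩ cntT T ⊆ W et ∩ cntT T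

/-- Strongly monotonic. -/
def SMon (M : Learner) (T : ℕ → Sig) : Prop :=
  ∀ s t, s ≤ t → ∀ es et : ℕ, outputs M T s es → outputs M T t et →
    W es ⊆ W et

/-- Non-U-shaped. -/
def NU (M : Learner) (T : ℕ → Sig) : Prop :=
  ∀ r s t, r ≤ s → s ≤ t → ∀ er es et : ℕ,
    outputs M T r er → outputs M T s es → outputs M T t et →
    W er = cntT T → W et = cntT T → W er = W es

/-- Strongly non-U-shaped. -/
def SNU (M : Learner) (T : ℕ → Sig) : Prop :=
  ∀ r s t, r ≤ s → s ≤ t → ∀ er et : ℕ,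
    outputs M T r er → outputs M T t et →
    W er = cntT T → W et = cntT T → M (seg T s) = Part.some (some er)

/-- Strongly decisive. -/
def SDec (M : Learner) (T : ℕ → Sig) : Prop :=
  ∀ r s t, r ≤ s → s ≤ t → ∀ er et : ℕ,
    outputs M T r er → outputs M T t et →
    W er = W et → M (seg T s) = Part.some (some er)

/-- Witness-based. -/
def Wb (M : Learner) (T : ℕ → Sig) : Prop :=
  ∀ r s t, r < s → s ≤ t → ∀ er et : ℕ,
    outputs M T r er → outputs M T t et →
    M (seg T s) ≠ Part.some (some er) →
    (cnt (seg T s) ∩ (W et \ W er)).Nonempty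

/-- A predicate on (learner, text) pairs allows for simulation on equivalent text. -/
def AFSOET (δ : Learner → (ℕ → Sig) → Prop) : Prop :=
  ∀ simu : ℕ → ℕ, Monotone simu → (∀ x, ∃ t, x ≤ simu t) →
    ∀ M M' : Learner, Partrec M → Partrec M' →
      ∀ T T' : ℕ → Sig,
        (∀ t, cnt (seg T' t) = cnt (seg T (simu t))) →
        (∀ t, M' (seg T' t) = M (seg T (simu t))) →
        δ M T → δ M' T'

/-- The hypotheses (partial values in `Ω`) `h` and `h'` are semantically equal:
both undefined, both `?`, or both proper hypotheses describing the same language. -/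
def SemEqAt (h h' : Part Hyp) : Prop :=
  (h.Dom ↔ h'.Dom) ∧ (h = Part.some (none : Hyp) ↔ h' = Part.some (none : Hyp)) ∧
  ∀ e e' : ℕ, h = Part.some (some e) → h' = Part.some (some e') → W e = W e'

/-- A restriction is semantic: it depends only on the text and the sequence of sets
described by the hypotheses. -/
def Semantic (δ : Learner → (ℕ → Sig) → Prop) : Prop :=
  ∀ M M' : Learner, Partrec M → Partrec M' → ∀ T : ℕ → Sig,
    (∀ t, SemEqAt (M (seg T t)) (M' (seg T t))) → δ M T → δ M' T

/-- `σ` is a locking sequence for `M` on `L`. -/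
def LockingSeq (M : Learner) (L : Set ℕ) (σ : List Sig) : Prop :=
  cnt σ ⊆ L ∧ (∃ e : ℕ, M σ = Part.some (some e) ∧ W e = L) ∧
    ∀ τ : List Sig, cnt τ ⊆ L → M (σ ++ τ) = M σ

/-- `M` is strongly locking on `L`. -/
def StronglyLocking (M : Learner) (L : Set ℕ) : Prop :=
  ∀ T, IsTextFor T L → ∃ t, LockingSeq M L (seg T t)

/-- The fixed computable bijection `π : ℕ → Ω` with `π 0 = ?` and `π (i+1) = i`. -/
def piFun : ℕ → Hyp
  | 0 => none
  | (i + 1) => some i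

/-- The inverse `π⁻¹ : Ω → ℕ` of `piFun`. -/
def piInv : Hyp → ℕ
  | none => 0
  | some e => e + 1

end BMSLearning

namespace BMSLearning

/-! ### generic Part / fold lemmas -/

theorem part_cases (o : Part α) : o = Part.none ∨ ∃ a, o = Part.some a := by
  by_cases h : o.Dom
  · exact Or.inr ⟨o.get h, (Part.some_get h).symm⟩
  · exact Or.inl (Part.eq_none_iff'.2 h)

section pFrom
variable (g : ℕ × Sig →. ℕ)

def pFrom (o : Part ℕ) (σ : List Sig) : Part ℕ :=
  σ.foldl (fun q x => q.bind fun a => g (a, x)) o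

@[simp] theorem pFrom_nil (o : Part ℕ) : pFrom g o [] = o := rfl

theorem pFrom_cons (o : Part ℕ) (x : Sig) (σ : List Sig) :
    pFrom g o (x :: σ) = pFrom g (o.bind fun a => g (a, x)) σ := rfl

theorem pFrom_append (o : Part ℕ) (σ τ : List Sig) :
    pFrom g o (σ ++ τ) = pFrom g (pFrom g o σ) τ := by
  simp [pFrom, List.foldl_append]

@[simp] theorem pFrom_none (σ : List Sig) : pFrom g Part.none σ = Part.none := by
  induction σ with
  | nil => rfl
  | cons x σ ih => rw [pFrom_cons, Part.bind_none _]; exact ih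

theorem pFrom_eq_bind (o : Part ℕ) (σ : List Sig) :
    pFrom g o σ = o.bind (fun a => pFrom g (Part.some a) σ) := by
  induction σ generalizing o with
  | nil => simp
  | cons x σ ih =>
      rw [pFrom_cons, ih, Part.bind_assoc]
      apply congrArg
      funext a
      rw [pFrom_cons, Part.bind_some, ih]

theorem sStar_eq_pFrom (σ : List Sig) : sStar g σ = pFrom g (Part.some 0) σ := rfl

theorem sStar_snoc (σ : List Sig) (x : Sig) :
    sStar g (σ ++ [x]) = (sStar g σ).bind fun a => g (a, x) := by
  rw [sStar_eq_pFrom, pFrom_append, sStar_eq_pFrom]; rfl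

theorem sStar_append (σ τ : List Sig) :
    sStar g (σ ++ τ) = (sStar g σ).bind fun a => pFrom g (Part.some a) τ := by
  rw [sStar_eq_pFrom, pFrom_append, ← sStar_eq_pFrom, pFrom_eq_bind]

end pFrom

/-! ### seg / cnt lemmas -/

@[simp] theorem seg_zero (T : ℕ → Sig) : seg T 0 = [] := rfl

theorem seg_succ (T : ℕ → Sig) (t : ℕ) : seg T (t + 1) = seg T t ++ [T t] := by
  simp [seg, List.range_succ]

@[simp] theorem seg_length (T : ℕ → Sig) (t : ℕ) : (seg T t).length = t := by
  simp [seg]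

theorem seg_getElem (T : ℕ → Sig) (t i : ℕ) (h : i < (seg T t).length) :
    (seg T t)[i] = T i := by
  simp [seg]

theorem cnt_append (σ τ : List Sig) : cnt (σ ++ τ) = cnt σ ∪ cnt τ := by
  ext z; simp [cnt]

theorem cnt_subset_cntT (T : ℕ → Sig) (t : ℕ) : cnt (seg T t) ⊆ cntT T := by
  intro z hz
  rcases List.mem_map.1 hz with ⟨i, _, hi⟩
  exact ⟨i, hi⟩

theorem mem_cntT_iff (T : ℕ → Sig) (z : ℕ) :
    z ∈ cntT T ↔ ∃ t, z ∈ cnt (seg T t) := by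
  constructor
  · rintro ⟨t, ht⟩
    refine ⟨t + 1, ?_⟩
    have : some z ∈ seg T (t+1) := by
      rw [seg_succ]; simp [ht]
    exact this
  · rintro ⟨t, ht⟩; exact cnt_subset_cntT T t ht

/-! ### bmsLearner lemmas -/

@[simp] theorem bmsLearner_nil (hf : ℕ × Sig →. Hyp) (sf : ℕ × Sig →. ℕ) :
    bmsLearner hf sf [] = Part.some (none : Hyp) := by
  simp [bmsLearner]

theorem bmsLearner_snoc (hf : ℕ × Sig →. Hyp) (sf : ℕ × Sig →. ℕ) (σ : List Sig) (x : Sig) :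
    bmsLearner hf sf (σ ++ [x]) = (sStar sf σ).bind fun q => hf (q, x) := by
  have hne : σ ++ [x] ≠ [] := by simp
  rw [bmsLearner, dif_neg hne, List.dropLast_concat, List.getLast_concat]

/-! ### state encoding -/

abbrev HList := List (ℕ × Sig)

def decH (s : ℕ) : HList := Denumerable.ofNat _ s.unpair.1
def decP (s : ℕ) : ℕ := s.unpair.2
def encS (H : HList) (p : ℕ) : ℕ := Nat.pair (Encodable.encode H) p

@[simp] theorem decH_encS (H : HList) (p : ℕ) : decH (encS H p) = H := by
  simp [decH, encS, Nat.unpair_pair, Denumerable.ofNat_encode]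

@[simp] theorem decP_encS (H : HList) (p : ℕ) : decP (encS H p) = p := by
  simp [decP, encS, Nat.unpair_pair]

@[simp] theorem decH_zero : decH 0 = [] := by
  simp [decH, Nat.unpair_zero, Denumerable.list_ofNat_zero]

@[simp] theorem decP_zero : decP 0 = 0 := by simp [decP, Nat.unpair_zero]

def anchors (H : HList) : List ℕ := H.map Prod.fst

/-! ### the new learner -/

def nextS (a : ℕ × Sig) (q : ℕ) : ℕ :=
  if q = decP a.1 ∨ q ∈ anchors (decH a.1) then a.1
  else encS (decH a.1 ++ [(decP a.1, a.2)]) q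

def sfN (sf : ℕ × Sig →. ℕ) : ℕ × Sig →. ℕ :=
  fun a => (sf (decP a.1, a.2)).map (nextS a)

def hfN (hf : ℕ × Sig →. Hyp) (sf : ℕ × Sig →. ℕ) : ℕ × Sig →. Hyp :=
  fun a => (sf (decP a.1, a.2)).bind fun _ => hf (decP a.1, a.2)

theorem nextS_cases (a : ℕ × Sig) (q : ℕ) :
    nextS a q = a.1 ∨
      (decH (nextS a q) = decH a.1 ++ [(decP a.1, a.2)] ∧ decP (nextS a q) = q) := by
  unfold nextS
  by_cases h : q = decP a.1 ∨ q ∈ anchors (decH a.1)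
  · rw [if_pos h]; exact Or.inl rfl
  · rw [if_neg h]; exact Or.inr ⟨by simp, by simp⟩

/-! ### never-return -/

theorem sStarN_extend (sf : ℕ × Sig →. ℕ) (τ σ : List Sig) (s' : ℕ)
    (h : sStar (sfN sf) (σ ++ τ) = Part.some s') :
    ∃ s, sStar (sfN sf) σ = Part.some s ∧ decH s <+: decH s' ∧ (decH s = decH s' → s = s') := by
  induction τ using List.reverseRecOn generalizing s' with
  | nil => exact ⟨s', by simpa using h, List.prefix_refl _, fun _ => rfl⟩
  | append_singleton μ x ih =>
      rw [← List.append_assoc, sStar_snoc] at h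
      have h' := Part.eq_some_iff.1 h
      rcases Part.mem_bind_iff.1 h' with ⟨sm, hsm, hmem⟩
      have hsm' : sStar (sfN sf) (σ ++ μ) = Part.some sm := Part.eq_some_iff.2 hsm
      rcases (Part.mem_map_iff _).1 hmem with ⟨v, _, hv⟩
      rcases ih sm hsm' with ⟨s, hs, hpre, heq⟩
      rcases nextS_cases (sm, x) v with hkeep | ⟨hH, _⟩
      · exact ⟨s, hs, by rw [← hv, hkeep]; exact hpre, by rw [← hv, hkeep]; exact heq⟩
      · refine ⟨s, hs, ?_, ?_⟩
        · rw [← hv, hH]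
          exact hpre.trans (by simp)
        · intro hcontr
          exfalso
          have h1 : (decH s).length ≤ (decH sm).length := hpre.length_le
          have h2 : (decH s').length = (decH sm).length + 1 := by
            rw [← hv, hH]; simp
          have h3 : (decH s).length = (decH s').length := by rw [hcontr]
          omega

theorem sStarN_none_mono (sf : ℕ × Sig →. ℕ) (σ τ : List Sig)
    (h : sStar (sfN sf) σ = Part.none) : sStar (sfN sf) (σ ++ τ) = Part.none := by
  rw [sStar_append, h, Part.bind_none _]

theorem neverReturn (sf : ℕ × Sig →. ℕ) :
    ∀ σ τ ρ : List Sig, σ <+: τ → τ <+: ρ →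
      sStar (sfN sf) σ = sStar (sfN sf) ρ → sStar (sfN sf) σ = sStar (sfN sf) τ := by
  intro σ τ ρ hστ hτρ heq
  obtain ⟨μ₁, rfl⟩ := hστ
  obtain ⟨μ₂, rfl⟩ := hτρ
  rcases part_cases (sStar (sfN sf) (σ ++ μ₁ ++ μ₂)) with hnone | ⟨s, hsome⟩
  · have hσ : sStar (sfN sf) σ = Part.none := by rw [heq, hnone]
    rw [hσ, sStarN_none_mono sf σ μ₁ hσ]
  · have hσ : sStar (sfN sf) σ = Part.some s := by rw [heq, hsome]
    rcases sStarN_extend sf μ₂ (σ ++ μ₁) s hsome with ⟨sm, hsm, hpre2, heq2⟩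
    rcases sStarN_extend sf μ₁ σ sm hsm with ⟨s₀, hs₀, hpre1, _⟩
    have e1 : s₀ = s := Part.some_inj.1 (hs₀.symm.trans hσ)
    rw [e1] at hpre1
    have hHeq : decH sm = decH s :=
      hpre2.eq_of_length (Nat.le_antisymm hpre2.length_le hpre1.length_le)
    rw [hσ, hsm, heq2 hHeq]

/-! ### chains and steering -/

def Chain (sf : ℕ × Sig →. ℕ) : HList → ℕ → ℕ → Prop
  | [], a, p => a = p
  | (b, ℓ) :: H, a, p => a = b ∧ ∃ c, sf (b, ℓ) = Part.some c ∧ Chain sf H c p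

@[simp] theorem chain_nil (sf : ℕ × Sig →. ℕ) (a p : ℕ) : Chain sf [] a p ↔ a = p := Iff.rfl

theorem chain_cons (sf : ℕ × Sig →. ℕ) (b : ℕ) (ℓ : Sig) (H : HList) (a p : ℕ) :
    Chain sf ((b, ℓ) :: H) a p ↔ a = b ∧ ∃ c, sf (b, ℓ) = Part.some c ∧ Chain sf H c p := Iff.rfl

theorem chain_snoc (sf : ℕ × Sig →. ℕ) (H : HList) (b : ℕ) (ℓ : Sig) (a p : ℕ) :
    Chain sf (H ++ [(b, ℓ)]) a p ↔ Chain sf H a b ∧ sf (b, ℓ) = Part.some p := by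
  induction H generalizing a with
  | nil =>
      constructor
      · rintro ⟨rfl, c, hc, rfl⟩; exact ⟨rfl, hc⟩
      · rintro ⟨rfl, hc⟩; exact ⟨rfl, p, hc, rfl⟩
  | cons e H ih =>
      obtain ⟨d, m⟩ := e
      constructor
      · rintro ⟨rfl, c, hc, hch⟩
        rcases (ih c).1 hch with ⟨h1, h2⟩
        exact ⟨⟨rfl, c, hc, h1⟩, h2⟩
      · rintro ⟨⟨rfl, c, hc, hch⟩, h2⟩
        exact ⟨rfl, c, hc, (ih c).2 ⟨hch, h2⟩⟩

theorem chain_pFrom (sf : ℕ × Sig →. ℕ) (H : HList) (a p : ℕ) (h : Chain sf H a p) :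
    pFrom sf (Part.some a) (H.map Prod.snd) = Part.some p := by
  induction H generalizing a with
  | nil => simpa using congrArg Part.some h
  | cons e H ih =>
      obtain ⟨b, ℓ⟩ := e
      rcases h with ⟨rfl, c, hc, hch⟩
      have : pFrom sf (Part.some a) (ℓ :: H.map Prod.snd)
          = pFrom sf (sf (a, ℓ)) (H.map Prod.snd) := by
        rw [pFrom_cons, Part.bind_some]
      rw [List.map_cons, this, hc]
      exact ih c hch

def steerW : HList → ℕ → List Sig
  | [], _ => []
  | (b, ℓ) :: H, a => if b = a then ℓ :: H.map Prod.snd else steerW H a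

theorem steerW_spec (sf : ℕ × Sig →. ℕ) (H : HList) (c p a : ℕ)
    (h : Chain sf H c p) (ha : a ∈ anchors H) :
    pFrom sf (Part.some a) (steerW H a) = Part.some p := by
  induction H generalizing c with
  | nil => simp [anchors] at ha
  | cons e H ih =>
      obtain ⟨b, ℓ⟩ := e
      rcases h with ⟨hcb, d, hd, hch⟩
      subst hcb
      by_cases hba : c = a
      · subst hba
        rw [steerW, if_pos rfl, pFrom_cons, Part.bind_some, hd]
        exact chain_pFrom sf H d p hch
      · have ha' : a ∈ anchors H := by
          rcases List.mem_cons.1 ha with h | h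
          · exact absurd h.symm hba
          · exact h
        rw [steerW, if_neg hba]
        exact ih d hch ha'

def steer (H : HList) (p a : ℕ) : List Sig := if a = p then [] else steerW H a

theorem steer_spec (sf : ℕ × Sig →. ℕ) (H : HList) (p a : ℕ)
    (h : Chain sf H 0 p) (ha : a = p ∨ a ∈ anchors H) :
    pFrom sf (Part.some a) (steer H p a) = Part.some p := by
  by_cases hap : a = p
  · rw [steer, if_pos hap, pFrom_nil, hap]
  · rcases ha with h' | h'
    · exact absurd h' hap
    · rw [steer, if_neg hap]
      exact steerW_spec sf H 0 p a h h'

theorem steerW_subset (H : HList) (a : ℕ) : ∀ x ∈ steerW H a, x ∈ H.map Prod.snd := by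
  induction H with
  | nil => intro x hx; simp [steerW] at hx
  | cons e H ih =>
      obtain ⟨b, ℓ⟩ := e
      intro x hx
      rw [steerW] at hx
      by_cases hba : b = a
      · rw [if_pos hba] at hx
        simpa using hx
      · rw [if_neg hba] at hx
        simp only [List.map_cons, List.mem_cons]
        exact Or.inr (ih x hx)

theorem steer_subset (H : HList) (p a : ℕ) : ∀ x ∈ steer H p a, x ∈ H.map Prod.snd := by
  intro x hx
  rw [steer] at hx
  by_cases hap : a = p
  · rw [if_pos hap] at hx; simp at hx
  · rw [if_neg hap] at hx; exact steerW_subset H a x hx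

theorem cnt_subset_of_letters (l : List Sig) (S : Set ℕ)
    (h : ∀ ℓ ∈ l, ∀ z : ℕ, ℓ = some z → z ∈ S) : cnt l ⊆ S := by
  intro z hz
  rcases hz with hz
  exact h (some z) hz z rfl

/-! ### the simulated text -/

section Construction

variable (sf : ℕ × Sig →. ℕ) (T : ℕ → Sig)

noncomputable def stN (t : ℕ) : Part ℕ := sStar (sfN sf) (seg T t)

noncomputable def qP (t : ℕ) : Part ℕ := (stN sf T t).bind fun s => sf (decP s, T t)

noncomputable def mposB : ℕ → ℕ := fun t =>
  Nat.casesOn t 0 fun t' =>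
    @dite _ ((qP sf T t').Dom) (Classical.propDecidable _) (fun h => (qP sf T t').get h)
      (fun _ => 0)

noncomputable def blockB (t : ℕ) : List Sig :=
  @dite _ ((stN sf T t).Dom) (Classical.propDecidable _)
    (fun h =>
      steer (decH ((stN sf T t).get h)) (decP ((stN sf T t).get h)) (mposB sf T t) ++ [T t])
    (fun _ => [T t])

noncomputable def PB : ℕ → List Sig := fun t =>
  Nat.rec [] (fun t' ih => ih ++ blockB sf T t') t

@[simp] theorem PB_zero : PB sf T 0 = [] := rfl

theorem PB_succ (t : ℕ) : PB sf T (t + 1) = PB sf T t ++ blockB sf T t := rfl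

@[simp] theorem mposB_zero : mposB sf T 0 = 0 := rfl

noncomputable def TT : ℕ → Sig := fun n => (PB sf T (n + 1)).getD n none

theorem stN_succ (t : ℕ) :
    stN sf T (t + 1) = (stN sf T t).bind fun s => sfN sf (s, T t) := by
  rw [stN, seg_succ, sStar_snoc]; rfl

theorem stN_zero : stN sf T 0 = Part.some 0 := rfl

theorem blockB_of_some {t : ℕ} {s : ℕ} (h : stN sf T t = Part.some s) :
    blockB sf T t = steer (decH s) (decP s) (mposB sf T t) ++ [T t] := by
  have hdom : (stN sf T t).Dom := by rw [h]; trivial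
  have hget : (stN sf T t).get hdom = s := Part.get_eq_of_mem (Part.eq_some_iff.1 h) hdom
  rw [blockB, dif_pos hdom, hget]


theorem blockB_of_none {t : ℕ} (h : stN sf T t = Part.none) :
    blockB sf T t = [T t] := by
  rw [blockB, dif_neg]
  rw [h]
  exact Part.not_none_dom

theorem mposB_of_q {t : ℕ} {v : ℕ} (h : qP sf T t = Part.some v) :
    mposB sf T (t + 1) = v := by
  have hdom : (qP sf T t).Dom := by rw [h]; trivial
  show @dite _ ((qP sf T t).Dom) (Classical.propDecidable _) _ _ = v
  rw [dif_pos hdom]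
  exact Part.get_eq_of_mem (Part.eq_some_iff.1 h) hdom

/-- The master invariant. -/
theorem master : ∀ t : ℕ,
    (stN sf T t = Part.none → sStar sf (PB sf T t) = Part.none) ∧
    (∀ s, stN sf T t = Part.some s →
      sStar sf (PB sf T t) = Part.some (mposB sf T t) ∧
      Chain sf (decH s) 0 (decP s) ∧
      (mposB sf T t = decP s ∨ mposB sf T t ∈ anchors (decH s)) ∧
      (anchors (decH s) ++ [decP s]).Nodup ∧
      (∀ e ∈ decH s, ∀ z : ℕ, e.2 = some z → z ∈ cnt (seg T t))) ∧
    cnt (PB sf T t) = cnt (seg T t) := by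
  intro t
  induction t with
  | zero =>
      refine ⟨?_, ?_, rfl⟩
      · intro h; exact absurd (stN_zero sf T ▸ h) (by simp)
      · intro s hs
        have hs0 : s = 0 := (Part.some_inj.1 ((stN_zero sf T).symm.trans hs)).symm
        subst hs0
        refine ⟨rfl, ?_, Or.inl rfl, by simp [anchors], by simp⟩
        simp [anchors, chain_nil]
  | succ t ih =>
      obtain ⟨ih_none, ih_some, ih_cnt⟩ := ih
      have hcnt_mono : cnt (seg T t) ⊆ cnt (seg T (t + 1)) := by
        rw [seg_succ, cnt_append]; exact Set.subset_union_left
      have hx_mem : ∀ z : ℕ, T t = some z → z ∈ cnt (seg T (t + 1)) := by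
        intro z hz
        rw [seg_succ, cnt_append]
        right
        simp [cnt, hz]
      rcases part_cases (stN sf T t) with h0 | ⟨s, hs⟩
      · -- already diverged
        have h1 : stN sf T (t + 1) = Part.none := by
          rw [stN_succ, h0, Part.bind_none]
        have hblock : blockB sf T t = [T t] := blockB_of_none sf T h0
        refine ⟨?_, ?_, ?_⟩
        · intro _
          rw [PB_succ, hblock, sStar_snoc, ih_none h0, Part.bind_none]
        · intro s hs; rw [h1] at hs; exact absurd hs (by simp)
        · rw [PB_succ, hblock, cnt_append, ih_cnt, seg_succ, cnt_append]
      · -- still alive at t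
        obtain ⟨hPB, hChain, hDisj, hNodup, hLet⟩ := ih_some s hs
        have hblock : blockB sf T t = steer (decH s) (decP s) (mposB sf T t) ++ [T t] :=
          blockB_of_some sf T hs
        have hsteer : sStar sf (PB sf T t ++ steer (decH s) (decP s) (mposB sf T t))
            = Part.some (decP s) := by
          rw [sStar_append, hPB, Part.bind_some]
          exact steer_spec sf (decH s) (decP s) (mposB sf T t) hChain hDisj
        have hPBsucc : PB sf T (t + 1)
            = (PB sf T t ++ steer (decH s) (decP s) (mposB sf T t)) ++ [T t] := by
          rw [PB_succ, hblock, List.append_assoc]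
        have hsfPB : sStar sf (PB sf T (t + 1)) = sf (decP s, T t) := by
          rw [hPBsucc, sStar_snoc, hsteer, Part.bind_some]
        have hstsucc : stN sf T (t + 1) = (sf (decP s, T t)).map (nextS (s, T t)) := by
          rw [stN_succ, hs, Part.bind_some]; rfl
        have hqP : qP sf T t = sf (decP s, T t) := by
          rw [qP, hs, Part.bind_some]
        have hsteer_cnt : cnt (steer (decH s) (decP s) (mposB sf T t)) ⊆ cnt (seg T t) := by
          apply cnt_subset_of_letters
          intro ℓ hℓ z hz
          rcases List.mem_map.1 (steer_subset _ _ _ ℓ hℓ) with ⟨e, he, hesnd⟩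
          exact hLet e he z (by rw [hesnd, hz])
        have hcnt' : cnt (PB sf T (t + 1)) = cnt (seg T (t + 1)) := by
          rw [hPBsucc, cnt_append, cnt_append, ih_cnt, seg_succ, cnt_append]
          ext z
          constructor
          · rintro ((hz | hz) | hz)
            · exact Or.inl hz
            · exact Or.inl (hsteer_cnt hz)
            · exact Or.inr hz
          · rintro (hz | hz)
            · exact Or.inl (Or.inl hz)
            · exact Or.inr hz
        rcases part_cases (sf (decP s, T t)) with hv | ⟨v, hv⟩
        · -- diverges now
          have h1 : stN sf T (t + 1) = Part.none := by rw [hstsucc, hv, Part.map_none]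
          refine ⟨fun _ => by rw [hsfPB, hv], ?_, hcnt'⟩
          intro s' hs'; rw [h1] at hs'; exact absurd hs' (by simp)
        · -- defined step
          have hmpos : mposB sf T (t + 1) = v := mposB_of_q sf T (hqP.trans hv)
          have h1 : stN sf T (t + 1) = Part.some (nextS (s, T t) v) := by
            rw [hstsucc, hv]; rfl
          refine ⟨fun hc => absurd (h1 ▸ hc) (by simp), ?_, hcnt'⟩
          intro s' hs'
          have hs'eq : s' = nextS (s, T t) v := (Part.some_inj.1 (h1.symm.trans hs')).symm
          subst hs'eq
          refine ⟨by rw [hsfPB, hv, hmpos], ?_⟩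
          by_cases hkeep : v = decP (s, T t).1 ∨ v ∈ anchors (decH (s, T t).1)
          · -- keep
            have hnext : nextS (s, T t) v = s := by rw [nextS, if_pos hkeep]
            rw [hnext]
            exact ⟨hChain, by rw [hmpos]; exact hkeep, hNodup,
              fun e he z hz => hcnt_mono (hLet e he z hz)⟩
          · -- re-anchor
            have hnext : nextS (s, T t) v = encS (decH s ++ [(decP s, T t)]) v := by
              rw [nextS, if_neg hkeep]
            push_neg at hkeep
            obtain ⟨hvp, hva⟩ := hkeep
            rw [hnext]
            refine ⟨?_, ?_, ?_, ?_⟩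
            · rw [decH_encS, decP_encS, chain_snoc]
              exact ⟨hChain, hv⟩
            · rw [decP_encS, hmpos]; exact Or.inl rfl
            · rw [decH_encS, decP_encS]
              have : anchors (decH s ++ [(decP s, T t)]) = anchors (decH s) ++ [decP s] := by
                simp [anchors]
              rw [this]
              rw [List.nodup_append]
              refine ⟨hNodup, by simp, ?_⟩
              intro a ha b hb₁ hb
              simp only [List.mem_singleton] at hb₁; subst hb₁
              subst hb
              rcases List.mem_append.1 ha with ha | ha
              · exact hva ha
              · simp only [List.mem_singleton] at ha
                exact hvp ha
            · rw [decH_encS]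
              intro e he z hz
              rcases List.mem_append.1 he with he | he
              · exact hcnt_mono (hLet e he z hz)
              · simp only [List.mem_singleton] at he
                subst he
                exact hx_mem z hz

/-! ### consequences of the construction -/

theorem blockB_ne_nil (t : ℕ) : blockB sf T t ≠ [] := by
  rw [blockB]; split <;> simp

theorem PB_prefix_succ (t : ℕ) : PB sf T t <+: PB sf T (t + 1) :=
  ⟨blockB sf T t, (PB_succ sf T t).symm⟩

theorem PB_prefix_mono {a b : ℕ} (h : a ≤ b) : PB sf T a <+: PB sf T b := by
  induction b, h using Nat.le_induction with
  | base => exact List.prefix_refl _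
  | succ b _ ih => exact ih.trans (PB_prefix_succ sf T b)

theorem PB_length_ge (t : ℕ) : t ≤ (PB sf T t).length := by
  induction t with
  | zero => simp
  | succ t ih =>
      rw [PB_succ, List.length_append]
      have := List.length_pos_iff.2 (blockB_ne_nil sf T t)
      omega

theorem prefix_getD {l₁ l₂ : List Sig} (h : l₁ <+: l₂) {n : ℕ} (hn : n < l₁.length) :
    l₁.getD n none = l₂.getD n none := by
  rw [List.getD_eq_getElem _ _ hn, List.getD_eq_getElem _ _ (lt_of_lt_of_le hn h.length_le)]
  exact h.getElem hn

theorem TT_getD {t n : ℕ} (hn : n < (PB sf T t).length) :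
    TT sf T n = (PB sf T t).getD n none := by
  show (PB sf T (n + 1)).getD n none = (PB sf T t).getD n none
  have h1 : n < (PB sf T (n + 1)).length :=
    lt_of_lt_of_le (Nat.lt_succ_self n) (PB_length_ge sf T (n + 1))
  rcases le_total (n + 1) t with hle | hle
  · exact prefix_getD (PB_prefix_mono sf T hle) h1
  · exact (prefix_getD (PB_prefix_mono sf T hle) hn).symm

theorem seg_TT_of_prefix {l : List Sig} {t : ℕ} (h : l <+: PB sf T t) :
    seg (TT sf T) l.length = l := by
  apply List.ext_getElem
  · simp
  · intro i h1 h2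
    rw [seg_getElem]
    have hi : i < l.length := h2
    have hiPB : i < (PB sf T t).length := lt_of_lt_of_le hi h.length_le
    rw [TT_getD sf T hiPB, List.getD_eq_getElem _ _ hiPB]
    exact (h.getElem hi).symm

theorem seg_TT_PB (t : ℕ) : seg (TT sf T) (PB sf T t).length = PB sf T t :=
  seg_TT_of_prefix sf T (List.prefix_refl _)

theorem cntT_TT : cntT (TT sf T) = cntT T := by
  ext z
  constructor
  · rintro ⟨n, hn⟩
    have hlen : n < (PB sf T (n + 1)).length := lt_of_lt_of_le (Nat.lt_succ_self n) (PB_length_ge sf T (n + 1))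
    have : TT sf T n = (PB sf T (n + 1)).getD n none := TT_getD sf T hlen
    rw [hn] at this
    have h3 : (PB sf T (n + 1)).getD n none = some z := by rw [← this]
    rw [List.getD_eq_getElem _ _ hlen] at h3
    have hmem : some z ∈ PB sf T (n + 1) := h3 ▸ List.getElem_mem hlen
    have : z ∈ cnt (PB sf T (n + 1)) := hmem
    rw [(master sf T (n + 1)).2.2] at this
    exact cnt_subset_cntT T (n + 1) this
  · rintro ⟨t', ht'⟩
    have h1 : z ∈ cnt (seg T (t' + 1)) := by
      rw [seg_succ, cnt_append]
      right
      simp [cnt, ht']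
    rw [← (master sf T (t' + 1)).2.2, ← seg_TT_PB sf T (t' + 1)] at h1
    exact cnt_subset_cntT _ _ h1

theorem cnt_seg_eq (t : ℕ) :
    cnt (seg T t) = cnt (seg (TT sf T) ((PB sf T t).length)) := by
  rw [seg_TT_PB, (master sf T t).2.2]

theorem steer_sStar {t s : ℕ} (hs : stN sf T t = Part.some s) :
    sStar sf (PB sf T t ++ steer (decH s) (decP s) (mposB sf T t)) = Part.some (decP s) := by
  obtain ⟨hPB, hChain, hDisj, _, _⟩ := (master sf T t).2.1 s hs
  rw [sStar_append, hPB, Part.bind_some]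
  exact steer_spec sf (decH s) (decP s) (mposB sf T t) hChain hDisj

theorem output_eq (hf : ℕ × Sig →. Hyp) (hdom : ∀ p : ℕ × Sig, (hf p).Dom ↔ (sf p).Dom)
    (t : ℕ) :
    bmsLearner (hfN hf sf) (sfN sf) (seg T t)
      = bmsLearner hf sf (seg (TT sf T) ((PB sf T t).length)) := by
  rw [seg_TT_PB]
  cases t with
  | zero => simp
  | succ t =>
      rw [seg_succ, bmsLearner_snoc]
      rcases part_cases (stN sf T t) with h0 | ⟨s, hs⟩
      · rw [show sStar (sfN sf) (seg T t) = Part.none from h0, Part.bind_none]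
        rw [PB_succ, blockB_of_none sf T h0, bmsLearner_snoc,
          (master sf T t).1 h0, Part.bind_none]
      · rw [show sStar (sfN sf) (seg T t) = Part.some s from hs, Part.bind_some]
        rw [PB_succ, blockB_of_some sf T hs, ← List.append_assoc, bmsLearner_snoc,
          steer_sStar sf T hs, Part.bind_some]
        apply Part.ext
        intro y
        rw [hfN]
        simp only [Part.mem_bind_iff]
        constructor
        · rintro ⟨v, _, hy⟩; exact hy
        · intro hy
          have hd : (hf (decP s, T t)).Dom := Part.dom_iff_mem.2 ⟨y, hy⟩
          have hsd : (sf (decP s, T t)).Dom := (hdom _).1 hd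
          exact ⟨(sf (decP s, T t)).get hsd, Part.get_mem hsd, hy⟩

theorem seg_prefix_mono (T₀ : ℕ → Sig) {a b : ℕ} (h : a ≤ b) : seg T₀ a <+: seg T₀ b := by
  induction b, h using Nat.le_induction with
  | base => exact List.prefix_refl _
  | succ b _ ih => exact ih.trans (by rw [seg_succ]; exact ⟨[T₀ b], rfl⟩)

theorem statesFinN (hfin : StatesFin sf (TT sf T)) : StatesFin (sfN sf) T := by
  by_cases hall : ∀ t, ∃ s, stN sf T t = Part.some s
  · -- total case
    choose sel hsel using hall
    -- anchors are states of sf on TT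
    set S : Set ℕ := {q : ℕ | ∃ m, sStar sf (seg (TT sf T) m) = Part.some q} with hS
    have hanch : ∀ t, ∀ a ∈ anchors (decH (sel t)) ++ [decP (sel t)], a ∈ S := by
      intro t
      induction t with
      | zero =>
          have h0 : sel 0 = 0 := by
            have := hsel 0
            rw [stN_zero] at this
            exact Part.some_inj.1 this.symm
          intro a ha
          rw [h0] at ha
          simp [anchors] at ha
          subst ha
          exact ⟨0, rfl⟩
      | succ t ih =>
          have hstep : stN sf T (t + 1) = (sf (decP (sel t), T t)).map (nextS (sel t, T t)) := by
            rw [stN_succ, hsel t, Part.bind_some]; rfl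
          have : Part.some (sel (t+1)) = (sf (decP (sel t), T t)).map (nextS (sel t, T t)) := by
            rw [← hstep, hsel]
          rcases (Part.mem_map_iff _).1 (Part.eq_some_iff.1 this.symm) with ⟨v, hvmem, hv⟩
          have hvq : qP sf T t = Part.some v := by
            rw [qP, hsel t, Part.bind_some]
            exact Part.eq_some_iff.2 hvmem
          have hmpos : mposB sf T (t + 1) = v := mposB_of_q sf T hvq
          have hvS : v ∈ S := by
            obtain ⟨hPB, _, _, _, _⟩ := (master sf T (t+1)).2.1 _ (hsel (t+1))
            exact ⟨(PB sf T (t+1)).length, by rw [seg_TT_PB]; rw [hPB, hmpos]⟩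
          intro a ha
          by_cases hkeep : v = decP (sel t, T t).1 ∨ v ∈ anchors (decH (sel t, T t).1)
          · have : sel (t+1) = sel t := by rw [← hv, nextS, if_pos hkeep]
            rw [this] at ha
            exact ih a ha
          · have hkeq : sel (t+1) = encS (decH (sel t) ++ [(decP (sel t), T t)]) v := by
              rw [← hv, nextS, if_neg hkeep]
            rw [hkeq] at ha
            simp only [decH_encS, decP_encS] at ha
            have : anchors (decH (sel t) ++ [(decP (sel t), T t)])
                = anchors (decH (sel t)) ++ [decP (sel t)] := by simp [anchors]
            rw [this] at ha
            rcases List.mem_append.1 ha with ha | ha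
            · exact ih a ha
            · simp only [List.mem_singleton] at ha
              subst ha
              exact hvS
    -- length bound
    have hlenbd : ∀ t, (decH (sel t)).length + 1 ≤ hfin.toFinset.card := by
      intro t
      obtain ⟨_, _, _, hNodup, _⟩ := (master sf T t).2.1 _ (hsel t)
      have hsub : (anchors (decH (sel t)) ++ [decP (sel t)]).toFinset ⊆ hfin.toFinset := by
        intro a ha
        rw [List.mem_toFinset] at ha
        apply (Set.Finite.mem_toFinset (s := {q : ℕ | ∃ t, sStar sf (seg (TT sf T) t) = Part.some q}) hfin).2
        exact hanch t a ha
      have hcard := Finset.card_le_card hsub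
      rw [List.toFinset_card_of_nodup hNodup] at hcard
      simpa [anchors] using hcard
    -- prefix chain
    have hpre : ∀ a b : ℕ, a ≤ b → decH (sel a) <+: decH (sel b) ∧
        (decH (sel a) = decH (sel b) → sel a = sel b) := by
      intro a b hab
      obtain ⟨μ, hμ⟩ := seg_prefix_mono T hab
      have hb : sStar (sfN sf) (seg T a ++ μ) = Part.some (sel b) := by rw [hμ]; exact hsel b
      rcases sStarN_extend sf μ (seg T a) (sel b) hb with ⟨s, hsa, hp, he⟩
      have : s = sel a := Part.some_inj.1 ((hsel a).symm.trans hsa).symm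
      subst this
      exact ⟨hp, he⟩
    -- eventually constant
    set f : ℕ → ℕ := fun t => (decH (sel t)).length with hf
    have hbddf : BddAbove (Set.range f) := by
      refine ⟨hfin.toFinset.card, ?_⟩
      rintro n ⟨t, rfl⟩
      have := hlenbd t
      simp only [hf]
      omega
    have hne : (Set.range f).Nonempty := ⟨f 0, 0, rfl⟩
    have hmem := Nat.sSup_mem hne hbddf
    obtain ⟨tstar, htstar⟩ := hmem
    have hconst : ∀ t, tstar ≤ t → sel t = sel tstar := by
      intro t ht
      obtain ⟨hp, he⟩ := hpre tstar t ht
      have h1 : f t ≤ f tstar := by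
        rw [htstar]
        exact le_csSup hbddf ⟨t, rfl⟩
      have heq : decH (sel tstar) = decH (sel t) :=
        hp.eq_of_length (Nat.le_antisymm hp.length_le h1)
      exact (he heq).symm
    -- conclude
    apply Set.Finite.subset (Set.Finite.image (fun t => sel t) (Set.finite_Iic tstar))
    intro q hq
    obtain ⟨t, ht⟩ := hq
    have hqt : q = sel t := Part.some_inj.1 ((hsel t).symm.trans ht).symm
    rcases le_total t tstar with hle | hle
    · exact ⟨t, Set.mem_Iic.2 hle, hqt.symm⟩
    · refine ⟨tstar, Set.mem_Iic.2 le_rfl, ?_⟩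
      show sel tstar = q
      rw [hqt, hconst t hle]
  · -- divergence case
    push_neg at hall
    obtain ⟨t0, ht0⟩ := hall
    have ht0' : stN sf T t0 = Part.none := by
      rcases part_cases (stN sf T t0) with h | ⟨s, h⟩
      · exact h
      · exact absurd h (ht0 s)
    have hnone : ∀ t, t0 ≤ t → stN sf T t = Part.none := by
      intro t ht
      obtain ⟨μ, hμ⟩ := seg_prefix_mono T ht
      rw [stN, ← hμ]
      exact sStarN_none_mono sf (seg T t0) μ ht0'
    have hsub : ∀ t : ℕ, {q : ℕ | stN sf T t = Part.some q}.Finite := by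
      intro t
      apply Set.Subsingleton.finite
      intro q1 h1 q2 h2
      exact Part.some_inj.1 ((Eq.symm h1).trans h2)
    apply Set.Finite.subset ((Set.finite_Iio t0).biUnion (fun t _ => hsub t))
    rintro q ⟨t, ht⟩
    have ht' : stN sf T t = Part.some q := ht
    have htlt : t < t0 := by
      by_contra hge
      rw [hnone t (le_of_not_gt hge)] at ht'
      exact absurd ht' (by simp)
    exact Set.mem_biUnion htlt ht'

end Construction

/-! ### computability -/

section Computability

theorem fix_none {α β : Type*} {f : α →. β ⊕ α} {a : α} (h : f a = Part.none) :
    PFun.fix f a = Part.none := by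
  rw [Part.eq_none_iff]
  intro b hb
  rcases PFun.mem_fix_iff.1 hb with h1 | ⟨a', h1, _⟩ <;>
    · rw [h] at h1; exact Part.notMem_none _ h1

theorem fix_stop {α β : Type*} {f : α →. β ⊕ α} {a : α} {b : β}
    (h : f a = Part.some (Sum.inl b)) : PFun.fix f a = Part.some b := by
  apply Part.ext
  intro y
  constructor
  · intro hy
    rcases PFun.mem_fix_iff.1 hy with h1 | ⟨a', h1, _⟩
    · rw [h] at h1
      have := Part.mem_some_iff.1 h1
      simp [Sum.inl.injEq] at this
      simp [Part.mem_some_iff, this]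
    · rw [h] at h1
      have := Part.mem_some_iff.1 h1
      simp at this
  · intro hy
    have : y = b := Part.mem_some_iff.1 hy
    subst this
    exact PFun.mem_fix_iff.2 (Or.inl (by rw [h]; exact Part.mem_some _))

theorem fix_fwd {α β : Type*} {f : α →. β ⊕ α} {a a' : α}
    (h : f a = Part.some (Sum.inr a')) : PFun.fix f a = PFun.fix f a' := by
  apply Part.ext
  intro y
  constructor
  · intro hy
    rcases PFun.mem_fix_iff.1 hy with h1 | ⟨a'', h1, h2⟩
    · rw [h] at h1
      have := Part.mem_some_iff.1 h1
      simp at this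
    · rw [h] at h1
      have := Part.mem_some_iff.1 h1
      simp only [Sum.inr.injEq] at this
      rwa [← this]
  · intro hy
    exact PFun.mem_fix_iff.2 (Or.inr ⟨a', by rw [h]; exact Part.mem_some _, hy⟩)

variable (sf : ℕ × Sig →. ℕ) (hf : ℕ × Sig →. Hyp)

def stepF : (List Sig × ℕ) →. (ℕ ⊕ (List Sig × ℕ)) := fun s =>
  Option.casesOn s.1.head? (Part.some (Sum.inl s.2))
    (fun x => (sf (s.2, x)).map fun b => Sum.inr (s.1.tail, b))

theorem stepF_nil (q : ℕ) : stepF sf ([], q) = Part.some (Sum.inl q) := rfl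

theorem stepF_cons (x : Sig) (l : List Sig) (q : ℕ) :
    stepF sf (x :: l, q) = (sf (q, x)).map fun b => Sum.inr (l, b) := rfl

theorem fix_stepF : ∀ (l : List Sig) (q : ℕ),
    PFun.fix (stepF sf) (l, q) = pFrom sf (Part.some q) l := by
  intro l
  induction l with
  | nil => intro q; rw [fix_stop (stepF_nil sf q)]; rfl
  | cons x l ih =>
      intro q
      have hpf : pFrom sf (Part.some q) (x :: l) = pFrom sf (sf (q, x)) l := by
        rw [pFrom_cons, Part.bind_some]
      rcases part_cases (sf (q, x)) with h | ⟨v, h⟩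
      · rw [hpf, h, pFrom_none]
        apply fix_none
        rw [stepF_cons, h, Part.map_none]
      · rw [hpf, h]
        have : stepF sf (x :: l, q) = Part.some (Sum.inr (l, v)) := by
          rw [stepF_cons, h]; rfl
        rw [fix_fwd this]
        exact ih v

theorem sStar_eq_fix (l : List Sig) : sStar sf l = PFun.fix (stepF sf) (l, 0) := by
  rw [fix_stepF, sStar_eq_pFrom]

set_option maxHeartbeats 1000000 in
theorem partrec_stepF (hsf : Partrec sf) : Partrec (stepF sf) := by
  apply Partrec.optionCasesOn_right
    (o := fun s : List Sig × ℕ => s.1.head?)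
    (f := fun s : List Sig × ℕ => (Sum.inl s.2 : ℕ ⊕ (List Sig × ℕ)))
    (g := fun s x => (sf (s.2, x)).map fun b => Sum.inr (s.1.tail, b))
  · exact (Primrec.list_head?.comp Primrec.fst).to_comp
  · exact (Primrec.sumInl.comp Primrec.snd).to_comp
  · apply Partrec.map
    · exact hsf.comp ((Primrec.pair (Primrec.snd.comp Primrec.fst) Primrec.snd).to_comp)
    · exact Computable.to₂ ((Primrec.sumInr.comp
        ((Primrec.list_tail.comp (Primrec.fst.comp (Primrec.fst.comp Primrec.fst))).pair
          Primrec.snd)).to_comp)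

theorem list_dropLast_eq (l : List Sig) : l.dropLast = l.reverse.tail.reverse := by
  induction l using List.reverseRecOn with
  | nil => simp
  | append_singleton σ x _ => simp

theorem partrec_sStarFix (hsf : Partrec sf) :
    Partrec fun l : List Sig => PFun.fix (stepF sf) (l, 0) :=
  (partrec_stepF sf hsf).fix.comp (Computable.id.pair (Computable.const 0))

theorem bmsLearner_eq_cases (τ : List Sig) :
    bmsLearner hf sf τ
      = Option.casesOn τ.getLast? (Part.some (none : Hyp))
          (fun x => (sStar sf τ.dropLast).bind fun q => hf (q, x)) := by
  induction τ using List.reverseRecOn with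
  | nil => simp
  | append_singleton σ x _ =>
      rw [bmsLearner_snoc, List.getLast?_concat, List.dropLast_concat]

theorem partrec_bmsLearner (hhf : Partrec hf) (hsf : Partrec sf) :
    Partrec (bmsLearner hf sf) := by
  have hgetLast : Computable fun τ : List Sig => τ.getLast? := by
    apply Primrec.to_comp
    apply Primrec.of_eq (Primrec.list_head?.comp Primrec.list_reverse)
    intro l
    exact List.head?_reverse
  have hdropLast : Computable fun τ : List Sig => τ.dropLast := by
    apply Primrec.to_comp
    apply Primrec.of_eq
      (Primrec.list_reverse.comp (Primrec.list_tail.comp Primrec.list_reverse))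
    intro l
    exact (list_dropLast_eq l).symm
  have hmain : Partrec fun τ : List Sig =>
      Option.casesOn τ.getLast? (Part.some (none : Hyp))
        (fun x => (PFun.fix (stepF sf) (τ.dropLast, 0)).bind fun q => hf (q, x)) := by
    apply Partrec.optionCasesOn_right hgetLast
    · exact Computable.const (none : Hyp)
    · apply Partrec.bind
      · exact (partrec_sStarFix sf hsf).comp (hdropLast.comp Computable.fst)
      · exact hhf.comp ((Computable.snd).pair (Computable.snd.comp Computable.fst))
  apply hmain.of_eq
  intro τ
  rw [← sStar_eq_fix, ← bmsLearner_eq_cases]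

end Computability

/-! ### computability of the new learner -/

section CompN

theorem primrec_decH : Primrec decH :=
  (Primrec.ofNat HList).comp (Primrec.fst.comp Primrec.unpair)

theorem primrec_decP : Primrec decP :=
  Primrec.snd.comp Primrec.unpair

theorem primrec_anchors : Primrec anchors :=
  Primrec.list_map Primrec.id ((Primrec.fst.comp Primrec.snd).to₂)

set_option maxHeartbeats 1000000 in
theorem computable_nextS : Computable₂ nextS := by
  have hdHa : Primrec fun p : (ℕ × Sig) × ℕ => decH p.1.1 :=
    primrec_decH.comp (Primrec.fst.comp Primrec.fst)
  have hdPa : Primrec fun p : (ℕ × Sig) × ℕ => decP p.1.1 :=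
    primrec_decP.comp (Primrec.fst.comp Primrec.fst)
  have hanch : Primrec fun p : (ℕ × Sig) × ℕ => anchors (decH p.1.1) :=
    primrec_anchors.comp hdHa
  have hcond : PrimrecPred fun p : (ℕ × Sig) × ℕ =>
      p.2 = decP p.1.1 ∨ p.2 ∈ anchors (decH p.1.1) := by
    apply PrimrecPred.or
    · exact PrimrecRel.comp Primrec.eq Primrec.snd hdPa
    · have hidx : Primrec fun p : (ℕ × Sig) × ℕ => (anchors (decH p.1.1)).idxOf p.2 := by
        have := Primrec.list_idxOf (α := ℕ)
        exact Primrec₂.comp (Primrec.list_idxOf) Primrec.snd hanch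
      have hlen : Primrec fun p : (ℕ × Sig) × ℕ => (anchors (decH p.1.1)).length :=
        Primrec.list_length.comp hanch
      have hlt : PrimrecPred fun p : (ℕ × Sig) × ℕ =>
          (anchors (decH p.1.1)).idxOf p.2 < (anchors (decH p.1.1)).length :=
        PrimrecRel.comp Primrec.nat_lt hidx hlen
      apply PrimrecPred.of_eq hlt
      intro p
      exact List.idxOf_lt_length_iff
  have hthen : Primrec fun p : (ℕ × Sig) × ℕ => p.1.1 :=
    Primrec.fst.comp Primrec.fst
  have helse : Primrec fun p : (ℕ × Sig) × ℕ =>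
      encS (decH p.1.1 ++ [(decP p.1.1, p.1.2)]) p.2 := by
    apply Primrec₂.comp Primrec₂.natPair
    · apply Primrec.encode.comp
      apply Primrec₂.comp Primrec.list_concat hdHa
      exact hdPa.pair (Primrec.snd.comp Primrec.fst)
    · exact Primrec.snd
  exact (Primrec.ite hcond hthen helse).to_comp.to₂

theorem computable_pre : Computable fun a : ℕ × Sig => (decP a.1, a.2) :=
  ((primrec_decP.comp Primrec.fst).pair Primrec.snd).to_comp

theorem partrec_sfN {sf : ℕ × Sig →. ℕ} (hsf : Partrec sf) : Partrec (sfN sf) :=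
  Partrec.map (hsf.comp computable_pre) computable_nextS

theorem partrec_hfN {hf : ℕ × Sig →. Hyp} {sf : ℕ × Sig →. ℕ}
    (hhf : Partrec hf) (hsf : Partrec sf) : Partrec (hfN hf sf) :=
  Partrec.bind (hsf.comp computable_pre)
    (hhf.comp (((primrec_decP.comp (Primrec.fst.comp Primrec.fst)).pair
      (Primrec.snd.comp Primrec.fst)).to_comp))

theorem domN {hf : ℕ × Sig →. Hyp} {sf : ℕ × Sig →. ℕ}
    (hdom : ∀ p : ℕ × Sig, (hf p).Dom ↔ (sf p).Dom) (a : ℕ × Sig) :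
    (hfN hf sf a).Dom ↔ (sfN sf a).Dom := by
  have hm : (sfN sf a).Dom ↔ (sf (decP a.1, a.2)).Dom := by
    rw [sfN, Part.dom_iff_mem, Part.dom_iff_mem]
    constructor
    · rintro ⟨y, hy⟩
      rcases (Part.mem_map_iff _).1 hy with ⟨b, hb, _⟩
      exact ⟨b, hb⟩
    · rintro ⟨b, hb⟩
      exact ⟨nextS a b, (Part.mem_map_iff _).2 ⟨b, hb, rfl⟩⟩
  have hb : (hfN hf sf a).Dom ↔ (sf (decP a.1, a.2)).Dom := by
    rw [hfN]
    constructor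
    · intro h
      exact Part.bind_dom.1 h |>.fst
    · intro h1
      exact Part.bind_dom.2 ⟨h1, (hdom _).2 h1⟩
  rw [hb, hm]

end CompN


/-- If `β` allows for simulation on equivalent text and `ℒ` is
learnable under `β` by a BMS learner using finitely many states on every text for a
language in `ℒ`, then there is such a learner which moreover never returns to a
withdrawn state. -/
theorem exists_state_decisive_learner (β : Learner → (ℕ → Sig) → Prop)
    (hβ : AFSOET β) (ℒ : Set (Set ℕ))
    (h : ∃ hf sf, BMSPair hf sf ∧
        ∀ L ∈ ℒ, ∀ T, IsTextFor T L →
          β (bmsLearner hf sf) T ∧ StatesFin sf T) :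
    ∃ hf sf, BMSPair hf sf ∧
      (∀ σ τ ρ : List Sig, σ <+: τ → τ <+: ρ →
        sStar sf σ = sStar sf ρ → sStar sf σ = sStar sf τ) ∧
      ∀ L ∈ ℒ, ∀ T, IsTextFor T L →
        β (bmsLearner hf sf) T ∧ StatesFin sf T := by
  obtain ⟨hf, sf, ⟨hhf, hsf, hdom⟩, hlearn⟩ := h
  refine ⟨hfN hf sf, sfN sf, ⟨partrec_hfN hhf hsf, partrec_sfN hsf, domN hdom⟩,
    neverReturn sf, ?_⟩
  intro L hL T hT
  have htext : IsTextFor (TT sf T) L := by rw [IsTextFor, cntT_TT]; exact hT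
  obtain ⟨hβM, hfinM⟩ := hlearn L hL (TT sf T) htext
  refine ⟨?_, statesFinN sf T hfinM⟩
  exact hβ (fun t => (PB sf T t).length)
    (fun a b hab => (PB_prefix_mono sf T hab).length_le)
    (fun x => ⟨x, PB_length_ge sf T x⟩)
    (bmsLearner hf sf) (bmsLearner (hfN hf sf) (sfN sf))
    (partrec_bmsLearner sf hf hhf hsf)
    (partrec_bmsLearner (sfN sf) (hfN hf sf) (partrec_hfN hhf hsf) (partrec_sfN hsf))
    (TT sf T) T
    (fun t => cnt_seg_eq sf T t)
    (fun t => output_eq sf T hf hdom t)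
    hβM

end BMSLearning
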